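/- Let g ∈ ℝ^d, let ‖·‖_(1), …, ‖·‖_(k) be norms on ℝ^d, let x0 ∈ ℝ^d with ‖x0‖_(i) ≠ 0 for all i, and let μ*_i := 1/‖x0‖_(i) be the optimal weights, so that ‖x0‖_max,μ* = 1. Then dist(g, cone ∂‖·‖_max,μ*(x0)) = min over τ_1, …, τ_k ≥ 0 and x_1, …, x_k ∈ ℝ^d of ‖g − Σ_{i=1}^k x_i‖₂ subject to ⟨x_i, x0⟩ = τ_i·‖x0‖_max,μ* and ‖x_i‖_(i)° ≤ τ_i·μ*_i for all i ∈ [k]. -/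

import Mathlib

open MeasureTheory ProbabilityTheory
open scoped RealInnerProductSpace BigOperators Pointwise

noncomputable section

/-- Euclidean space `ℝ^d`. -/
abbrev E (d : ℕ) := EuclideanSpace ℝ (Fin d)

/-- `f` is a norm on `ℝ^d`. -/
def IsNorm {d : ℕ} (f : E d → ℝ) : Prop :=
  (∀ x y, f (x + y) ≤ f x + f y) ∧ (∀ (a : ℝ) (x : E d), f (a • x) = |a| * f x) ∧
    (∀ x, x ≠ 0 → 0 < f x)

/-- The cone generated by a set: `cone S = {τ x : x ∈ S, τ > 0}`. -/
def posCone {d : ℕ} (S : Set (E d)) : Set (E d) := {x | ∃ τ : ℝ, 0 < τ ∧ ∃ s ∈ S, x = τ • s}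

/-- The dual norm `f°(y) = sup {⟨x, y⟩ : f(x) ≤ 1}`. -/
def dualNorm {d : ℕ} (f : E d → ℝ) (y : E d) : ℝ := sSup ((fun x => ⟪x, y⟫) '' {x | f x ≤ 1})

/-- The subdifferential of a convex function `f` at `x`. -/
def subdiff {d : ℕ} (f : E d → ℝ) (x : E d) : Set (E d) :=
  {y | ∀ z, f x + ⟪y, z - x⟫ ≤ f z}

/-- The circular cone with axis `x` and angle `θ`:
`circ(x, θ) = {z : ⟨z, x⟩ ≥ cos(θ) ‖z‖₂ ‖x‖₂}`. -/
def circCone {d : ℕ} (x : E d) (θ : ℝ) : Set (E d) :=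
  {z | Real.cos θ * (‖z‖ * ‖x‖) ≤ ⟪z, x⟫}

/-- The descent cone of `f` at `x`. -/
def descentCone {d : ℕ} (f : E d → ℝ) (x : E d) : Set (E d) := posCone {y | f (x + y) ≤ f x}

/-- The polar of a cone. -/
def polarCone {d : ℕ} (K : Set (E d)) : Set (E d) := {y | ∀ x ∈ K, ⟪y, x⟫ ≤ 0}

/-- The standard Gaussian measure `N(0, Id_d)` on `ℝ^d`. -/
def stdGaussian (d : ℕ) : Measure (E d) :=
  (Measure.pi fun _ : Fin d => gaussianReal 0 1).map (MeasurableEquiv.toLp 2 (Fin d → ℝ))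

/-- The statistical dimension of a cone `K ⊆ ℝ^d`:  `δ(K) = E_g[dist(g, K°)²]`. -/
def statDim {d : ℕ} (K : Set (E d)) : ℝ :=
  ∫ g, (Metric.infDist g (polarCone K))^2 ∂(stdGaussian d)

variable {d : ℕ} {f : E d → ℝ}

lemma IsNorm.zero (hf : IsNorm f) : f 0 = 0 := by
  have := hf.2.1 0 0; simpa using this

lemma IsNorm.neg (hf : IsNorm f) (x : E d) : f (-x) = f x := by
  have := hf.2.1 (-1) x; simpa using this

lemma IsNorm.nonneg (hf : IsNorm f) (x : E d) : 0 ≤ f x := by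
  by_cases h : x = 0
  · simp [h, hf.zero]
  · exact (hf.2.2 x h).le

lemma IsNorm.eq_zero_iff (hf : IsNorm f) {x : E d} : f x = 0 ↔ x = 0 := by
  constructor
  · intro h; by_contra hx; exact absurd h (ne_of_gt (hf.2.2 x hx))
  · rintro rfl; exact hf.zero

lemma IsNorm.sum_le (hf : IsNorm f) {ι : Type*} (t : Finset ι) (v : ι → E d) :
    f (∑ j ∈ t, v j) ≤ ∑ j ∈ t, f (v j) := by
  classical
  induction t using Finset.induction with
  | empty => simp [hf.zero]
  | insert _ _ h ih =>
      rw [Finset.sum_insert h, Finset.sum_insert h]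
      exact le_trans (hf.1 _ _) (by linarith)

lemma IsNorm.exists_upper (hf : IsNorm f) : ∃ C > 0, ∀ x, f x ≤ C * ‖x‖ := by
  classical
  have hC : 0 ≤ ∑ j, f (EuclideanSpace.single j (1:ℝ)) :=
    Finset.sum_nonneg fun j _ => hf.nonneg _
  refine ⟨(∑ j, f (EuclideanSpace.single j 1)) + 1, by linarith, fun x => ?_⟩
  have hx : x = ∑ j, (x j) • EuclideanSpace.single j (1:ℝ) := by
    ext i
    rw [WithLp.ofLp_sum, Fintype.sum_apply]
    simp [EuclideanSpace.single_apply]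
  have habs : ∀ j, |x j| ≤ ‖x‖ := by
    intro j
    have h1 : ⟪EuclideanSpace.single j (1:ℝ), x⟫ = x j := by
      simp [EuclideanSpace.inner_single_left]
    have := abs_real_inner_le_norm (EuclideanSpace.single j (1:ℝ)) x
    rwa [h1, EuclideanSpace.norm_single, norm_one, one_mul] at this
  calc f x ≤ ∑ j, f ((x j) • EuclideanSpace.single j 1) := by
        conv_lhs => rw [hx]
        exact hf.sum_le _ _
    _ = ∑ j, |x j| * f (EuclideanSpace.single j 1) := by simp [hf.2.1]
    _ ≤ ∑ j, ‖x‖ * f (EuclideanSpace.single j 1) := by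
        refine Finset.sum_le_sum fun j _ => ?_
        exact mul_le_mul_of_nonneg_right (habs j) (hf.nonneg _)
    _ = (∑ j, f (EuclideanSpace.single j 1)) * ‖x‖ := by
        rw [Finset.sum_mul]; exact Finset.sum_congr rfl fun j _ => mul_comm _ _
    _ ≤ _ := by nlinarith [norm_nonneg x]

lemma IsNorm.continuous (hf : IsNorm f) : Continuous f := by
  obtain ⟨C, hC, hCle⟩ := hf.exists_upper
  have : LipschitzWith (Real.toNNReal C) f := by
    refine LipschitzWith.of_dist_le_mul fun x y => ?_
    have h1 : f x - f y ≤ f (x - y) := by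
      have := hf.1 (x - y) y; simpa using this
    have h2 : f y - f x ≤ f (x - y) := by
      have := hf.1 (y - x) x
      have hneg := hf.neg (x - y)
      simp only [neg_sub] at hneg
      rw [← hneg]
      simpa using this
    have h3 : |f x - f y| ≤ f (x - y) := abs_sub_le_iff.2 ⟨h1, h2⟩
    rw [Real.dist_eq, Real.coe_toNNReal _ hC.le, dist_eq_norm]
    exact h3.trans (hCle _)
  exact this.continuous

lemma IsNorm.exists_lower (hf : IsNorm f) : ∃ c > 0, ∀ x, c * ‖x‖ ≤ f x := by
  by_cases hd : ∀ x : E d, x = 0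
  · exact ⟨1, one_pos, fun x => by simp [hd x, hf.zero]⟩
  push_neg at hd
  obtain ⟨x₁, hx₁⟩ := hd
  have hsph : (Metric.sphere (0 : E d) 1).Nonempty :=
    ⟨‖x₁‖⁻¹ • x₁, by simp [norm_smul, inv_mul_cancel₀ (norm_ne_zero_iff.2 hx₁)]⟩
  have hcomp : IsCompact (Metric.sphere (0 : E d) 1) := isCompact_sphere 0 1
  obtain ⟨z, hz, hzmin⟩ := hcomp.exists_isMinOn hsph hf.continuous.continuousOn
  have hz1 : ‖z‖ = 1 := by simpa using hz
  have hzne : z ≠ 0 := by intro h; rw [h] at hz1; simp at hz1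
  refine ⟨f z, hf.2.2 z hzne, fun x => ?_⟩
  by_cases hx : x = 0
  · simp [hx, hf.zero]
  · have hnx : (0:ℝ) < ‖x‖ := norm_pos_iff.2 hx
    have hmem : ‖x‖⁻¹ • x ∈ Metric.sphere (0 : E d) 1 := by
      simp [norm_smul, inv_mul_cancel₀ hnx.ne']
    have : f z ≤ f (‖x‖⁻¹ • x) := hzmin hmem
    have heq : f (‖x‖⁻¹ • x) = ‖x‖⁻¹ * f x := by
      rw [hf.2.1]; congr 1; rw [abs_of_pos (by positivity)]
    rw [heq] at this
    calc f z * ‖x‖ ≤ (‖x‖⁻¹ * f x) * ‖x‖ := by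
          exact mul_le_mul_of_nonneg_right this hnx.le
      _ = f x := by field_simp

lemma IsNorm.bddAbove_dual (hf : IsNorm f) (y : E d) :
    BddAbove ((fun x => ⟪x, y⟫) '' {x | f x ≤ 1}) := by
  obtain ⟨c, hc, hcle⟩ := hf.exists_lower
  refine ⟨c⁻¹ * ‖y‖, ?_⟩
  rintro t ⟨x, hx, rfl⟩
  have h1 : ‖x‖ ≤ c⁻¹ := by
    have h2 : c * ‖x‖ ≤ 1 := (hcle x).trans hx
    calc ‖x‖ = c⁻¹ * (c * ‖x‖) := by field_simp
      _ ≤ c⁻¹ * 1 := mul_le_mul_of_nonneg_left h2 (by positivity)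
      _ = c⁻¹ := mul_one _
  calc ⟪x, y⟫ ≤ ‖x‖ * ‖y‖ := real_inner_le_norm x y
    _ ≤ c⁻¹ * ‖y‖ := mul_le_mul_of_nonneg_right h1 (norm_nonneg y)

lemma IsNorm.mem_dualSet_zero (hf : IsNorm f) (y : E d) :
    (0:ℝ) ∈ (fun x => ⟪x, y⟫) '' {x | f x ≤ 1} :=
  ⟨0, by simp [hf.zero], by simp⟩

lemma IsNorm.inner_le_dual (hf : IsNorm f) {x y : E d} (hx : f x ≤ 1) :
    ⟪x, y⟫ ≤ dualNorm f y :=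
  le_csSup (hf.bddAbove_dual y) ⟨x, hx, rfl⟩

lemma IsNorm.dual_nonneg (hf : IsNorm f) (y : E d) : 0 ≤ dualNorm f y := by
  have := hf.inner_le_dual (x := 0) (y := y) (by simp [hf.zero])
  simpa using this

lemma IsNorm.dual_le (hf : IsNorm f) {y : E d} {c : ℝ}
    (h : ∀ x, f x ≤ 1 → ⟪x, y⟫ ≤ c) : dualNorm f y ≤ c := by
  refine csSup_le ⟨0, hf.mem_dualSet_zero y⟩ ?_
  rintro t ⟨x, hx, rfl⟩
  exact h x hx

lemma IsNorm.inner_le_mul (hf : IsNorm f) (x y : E d) :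
    ⟪x, y⟫ ≤ f x * dualNorm f y := by
  by_cases hx : x = 0
  · simp [hx, hf.zero]
  · have hfx : 0 < f x := hf.2.2 x hx
    have h1 : f ((f x)⁻¹ • x) ≤ 1 := by
      rw [hf.2.1, abs_of_pos (by positivity), inv_mul_cancel₀ hfx.ne']
    have := hf.inner_le_dual (y := y) h1
    rw [real_inner_smul_left] at this
    calc ⟪x, y⟫ = f x * ((f x)⁻¹ * ⟪x, y⟫) := by field_simp
      _ ≤ f x * dualNorm f y := mul_le_mul_of_nonneg_left this hfx.le

lemma IsNorm.dual_zero (hf : IsNorm f) : dualNorm f 0 = 0 :=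
  le_antisymm (hf.dual_le fun x _ => by simp) (hf.dual_nonneg 0)

lemma IsNorm.dual_smul_le (hf : IsNorm f) {a : ℝ} (ha : 0 ≤ a) (y : E d) :
    dualNorm f (a • y) ≤ a * dualNorm f y := by
  refine hf.dual_le fun x hx => ?_
  rw [real_inner_smul_right]
  exact mul_le_mul_of_nonneg_left (hf.inner_le_dual hx) ha

lemma IsNorm.dual_add_le (hf : IsNorm f) (y z : E d) :
    dualNorm f (y + z) ≤ dualNorm f y + dualNorm f z := by
  refine hf.dual_le fun x hx => ?_
  rw [inner_add_right]
  exact add_le_add (hf.inner_le_dual hx) (hf.inner_le_dual hx)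

lemma IsNorm.dual_sum_le (hf : IsNorm f) {ι : Type*} (t : Finset ι) (v : ι → E d) :
    dualNorm f (∑ j ∈ t, v j) ≤ ∑ j ∈ t, dualNorm f (v j) := by
  classical
  induction t using Finset.induction with
  | empty => simp [hf.dual_zero]
  | insert _ _ h ih =>
      rw [Finset.sum_insert h, Finset.sum_insert h]
      exact le_trans (hf.dual_add_le _ _) (by linarith)

lemma IsNorm.norm_sq_le_dual (hf : IsNorm f) (y : E d) :
    ∃ C > 0, ‖y‖ ≤ C * dualNorm f y := by
  obtain ⟨C, hC, hCle⟩ := hf.exists_upper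
  refine ⟨C, hC, ?_⟩
  by_cases hy : y = 0
  · simp [hy, hf.dual_zero]
  · have h1 : ⟪y, y⟫ ≤ f y * dualNorm f y := hf.inner_le_mul y y
    rw [real_inner_self_eq_norm_sq] at h1
    have h2 : f y * dualNorm f y ≤ C * ‖y‖ * dualNorm f y :=
      mul_le_mul_of_nonneg_right (hCle y) (hf.dual_nonneg y)
    have hny : (0:ℝ) < ‖y‖ := norm_pos_iff.2 hy
    nlinarith

lemma IsNorm.eq_zero_of_dual_nonpos (hf : IsNorm f) {y : E d} (h : dualNorm f y ≤ 0) :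
    y = 0 := by
  obtain ⟨C, hC, hle⟩ := hf.norm_sq_le_dual y
  have : ‖y‖ ≤ 0 := hle.trans (by nlinarith)
  exact norm_le_zero_iff.1 this

lemma IsNorm.dual_le_norm (hf : IsNorm f) : ∃ c > 0, ∀ y, dualNorm f y ≤ c * ‖y‖ := by
  obtain ⟨c, hc, hcle⟩ := hf.exists_lower
  refine ⟨c⁻¹, by positivity, fun y => ?_⟩
  refine hf.dual_le fun x hx => ?_
  have h1 : ‖x‖ ≤ c⁻¹ := by
    have h2 : c * ‖x‖ ≤ 1 := (hcle x).trans hx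
    calc ‖x‖ = c⁻¹ * (c * ‖x‖) := by field_simp
      _ ≤ c⁻¹ * 1 := mul_le_mul_of_nonneg_left h2 (by positivity)
      _ = c⁻¹ := mul_one _
  calc ⟪x, y⟫ ≤ ‖x‖ * ‖y‖ := real_inner_le_norm x y
    _ ≤ c⁻¹ * ‖y‖ := mul_le_mul_of_nonneg_right h1 (norm_nonneg y)

lemma IsNorm.dual_continuous (hf : IsNorm f) : Continuous (dualNorm f) := by
  obtain ⟨c, hc, hle⟩ := hf.dual_le_norm
  have : LipschitzWith (Real.toNNReal c) (dualNorm f) := by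
    refine LipschitzWith.of_dist_le_mul fun x y => ?_
    have key : ∀ u v : E d, dualNorm f u - dualNorm f v ≤ c * ‖u - v‖ := by
      intro u v
      have h1 : dualNorm f u ≤ dualNorm f v + dualNorm f (u - v) := by
        have := hf.dual_add_le v (u - v); simpa using this
      have := hle (u - v)
      linarith
    have h1 := key x y
    have h2 := key y x
    rw [norm_sub_rev] at h2
    rw [Real.dist_eq, Real.coe_toNNReal _ hc.le, dist_eq_norm]
    rw [abs_sub_le_iff]
    exact ⟨h1, h2⟩
  exact this.continuous

lemma IsNorm.convex_ball (hf : IsNorm f) : Convex ℝ {x : E d | f x ≤ 1} := by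
  intro x hx y hy a b ha hb hab
  simp only [Set.mem_setOf_eq] at hx hy ⊢
  calc f (a • x + b • y) ≤ f (a • x) + f (b • y) := hf.1 _ _
    _ = a * f x + b * f y := by rw [hf.2.1, hf.2.1, abs_of_nonneg ha, abs_of_nonneg hb]
    _ ≤ a * 1 + b * 1 := add_le_add (mul_le_mul_of_nonneg_left hx ha)
        (mul_le_mul_of_nonneg_left hy hb)
    _ = 1 := by linarith

lemma IsNorm.isClosed_ball (hf : IsNorm f) : IsClosed {x : E d | f x ≤ 1} :=
  isClosed_le hf.continuous continuous_const

/-- Bipolar-type inequality: if `⟪w, v⟫ ≤ c` for all `w` in the dual unit ball,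
then `f v ≤ c`. -/
lemma IsNorm.le_of_dual_le (hf : IsNorm f) {v : E d} {c : ℝ}
    (h : ∀ w, dualNorm f w ≤ 1 → ⟪w, v⟫ ≤ c) : f v ≤ c := by
  have hc0 : 0 ≤ c := by have := h 0 (by simp [hf.dual_zero]); simpa using this
  by_contra hlt
  push_neg at hlt
  set t : ℝ := (c + f v) / 2 with ht
  have htc : c < t := by simp only [ht]; linarith
  have htf : t < f v := by simp only [ht]; linarith
  have ht0 : 0 < t := lt_of_le_of_lt hc0 htc
  set p : E d := t⁻¹ • v with hp
  have hpnot : p ∉ {x : E d | f x ≤ 1} := by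
    simp only [Set.mem_setOf_eq, hp, hf.2.1, abs_of_pos (inv_pos.2 ht0), not_le]
    rw [lt_inv_mul_iff₀ ht0]
    simpa using htf
  obtain ⟨φ, u, hφB, hφp⟩ :=
    geometric_hahn_banach_closed_point hf.convex_ball hf.isClosed_ball hpnot
  set w₀ : E d := (InnerProductSpace.toDual ℝ (E d)).symm φ with hw₀
  have hw₀eq : ∀ x, ⟪w₀, x⟫ = φ x := by
    intro x; simp [hw₀, InnerProductSpace.toDual_symm_apply]
  have hu0 : 0 < u := by
    have := hφB 0 (by simp [hf.zero]); simpa using this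
  have hdw₀ : dualNorm f w₀ ≤ u := by
    refine hf.dual_le fun x hx => ?_
    rw [real_inner_comm, hw₀eq]
    exact (hφB x hx).le
  have hdw : dualNorm f (u⁻¹ • w₀) ≤ 1 := by
    calc dualNorm f (u⁻¹ • w₀) ≤ u⁻¹ * dualNorm f w₀ := hf.dual_smul_le (by positivity) _
      _ ≤ u⁻¹ * u := mul_le_mul_of_nonneg_left hdw₀ (by positivity)
      _ = 1 := inv_mul_cancel₀ hu0.ne'
  have hval : ⟪u⁻¹ • w₀, v⟫ > c := by
    have h1 : φ p = t⁻¹ * φ v := by rw [hp, _root_.map_smul]; simp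
    have h2 : u < t⁻¹ * φ v := by rw [← h1]; exact hφp
    have h3 : t * u < φ v := by
      have := mul_lt_mul_of_pos_left h2 ht0
      rwa [mul_inv_cancel_left₀ ht0.ne'] at this
    rw [real_inner_smul_left, hw₀eq]
    have h4 : t * u ≤ φ v := h3.le
    calc c < t := htc
      _ = u⁻¹ * (t * u) := by field_simp
      _ ≤ u⁻¹ * φ v := mul_le_mul_of_nonneg_left h4 (by positivity)
  exact absurd (h _ hdw) (not_le.2 hval)

section Fmax
variable {k : ℕ} {F : Fin k → E d → ℝ} {x0 : E d}

lemma fx0_pos (hf : ∀ i, IsNorm (F i)) (hx0 : ∀ i, F i x0 ≠ 0) (i : Fin k) :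
    0 < F i x0 :=
  lt_of_le_of_ne ((hf i).nonneg x0) (Ne.symm (hx0 i))

lemma bdd_range (v : Fin k → ℝ) : BddAbove (Set.range v) :=
  (Set.finite_range v).bddAbove

lemma sup_one (hk : 0 < k) (hx0 : ∀ i, F i x0 ≠ 0) :
    (⨆ j, F j x0 / F j x0) = 1 := by
  have : Nonempty (Fin k) := ⟨⟨0, hk⟩⟩
  have h : ∀ j, F j x0 / F j x0 = 1 := fun j => div_self (hx0 j)
  simp only [h, ciSup_const]

lemma isNorm_Fmax (hk : 0 < k) (hf : ∀ i, IsNorm (F i)) (hx0 : ∀ i, F i x0 ≠ 0) :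
    IsNorm (fun x => ⨆ i, F i x / F i x0) := by
  have hne : Nonempty (Fin k) := ⟨⟨0, hk⟩⟩
  have hpos := fx0_pos hf hx0
  have hnn : ∀ i (x : E d), 0 ≤ F i x / F i x0 := fun i x =>
    div_nonneg ((hf i).nonneg x) (hpos i).le
  refine ⟨fun x y => ?_, fun a x => ?_, fun x hx => ?_⟩
  · refine ciSup_le fun i => ?_
    calc F i (x + y) / F i x0 ≤ (F i x + F i y) / F i x0 :=
          by
            have h := (hf i).1 x y
            have := hpos i
            gcongr
      _ = F i x / F i x0 + F i y / F i x0 := add_div _ _ _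
      _ ≤ (⨆ i, F i x / F i x0) + ⨆ i, F i y / F i x0 :=
          add_le_add (le_ciSup (bdd_range fun j => F j x / F j x0) i)
            (le_ciSup (bdd_range fun j => F j y / F j x0) i)
  · have h : ∀ i, F i (a • x) / F i x0 = |a| * (F i x / F i x0) := fun i => by
      rw [(hf i).2.1]; ring
    simp only [h]
    exact (Real.mul_iSup_of_nonneg (abs_nonneg a) _).symm
  · have h0 : 0 < F ⟨0, hk⟩ x / F ⟨0, hk⟩ x0 :=
      div_pos ((hf ⟨0, hk⟩).2.2 x hx) (hpos ⟨0, hk⟩)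
    exact lt_of_lt_of_le h0 (le_ciSup (bdd_range fun j => F j x / F j x0) _)

end Fmax

lemma IsNorm.exists_norm_le_dual (hf : IsNorm f) : ∃ C > 0, ∀ y, ‖y‖ ≤ C * dualNorm f y := by
  obtain ⟨C, hC, hCle⟩ := hf.exists_upper
  refine ⟨C, hC, fun y => ?_⟩
  by_cases hy : y = 0
  · simp [hy, hf.dual_zero]
  · have h1 : ⟪y, y⟫ ≤ f y * dualNorm f y := hf.inner_le_mul y y
    rw [real_inner_self_eq_norm_sq] at h1
    have h2 : f y * dualNorm f y ≤ C * ‖y‖ * dualNorm f y :=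
      mul_le_mul_of_nonneg_right (hCle y) (hf.dual_nonneg y)
    have hny : (0:ℝ) < ‖y‖ := norm_pos_iff.2 hy
    nlinarith

/-- Characterization of the subdifferential of a norm `F` with `F x0 = 1` at `x0`. -/
lemma subdiff_char {F : E d → ℝ} {x0 : E d} (hFn : IsNorm F) (hFx0 : F x0 = 1) :
    subdiff F x0 = {y | ⟪y, x0⟫ = 1 ∧ ∀ z, ⟪y, z⟫ ≤ F z} := by
  ext y
  constructor
  · intro hy
    have h0 := hy 0
    rw [hFx0, hFn.zero] at h0
    have h0' : 1 - ⟪y, x0⟫ ≤ 0 := by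
      have : ⟪y, (0:E d) - x0⟫ = -⟪y, x0⟫ := by rw [zero_sub, inner_neg_right]
      rw [this] at h0; linarith
    have h2 := hy ((2:ℝ) • x0)
    have h2' : F ((2:ℝ) • x0) = 2 := by rw [hFn.2.1, hFx0]; norm_num
    have h2'' : ⟪y, (2:ℝ) • x0 - x0⟫ = ⟪y, x0⟫ := by
      congr 1
      rw [two_smul]; abel
    rw [hFx0, h2', h2''] at h2
    have hinner : ⟪y, x0⟫ = 1 := by linarith
    refine ⟨hinner, fun z => ?_⟩
    have := hy z
    rw [hFx0, inner_sub_right, hinner] at this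
    linarith
  · rintro ⟨h1, h2⟩ z
    rw [hFx0, inner_sub_right, h1]
    have := h2 z
    linarith

lemma subdiff_nonempty {F : E d → ℝ} {x0 : E d} (hFn : IsNorm F) (hFx0 : F x0 = 1) :
    (subdiff F x0).Nonempty := by
  obtain ⟨C, hC, hCle⟩ := hFn.exists_upper
  set K : Set (E d) := {w | ∀ z, ⟪w, z⟫ ≤ F z} with hK
  have h0K : (0:E d) ∈ K := fun z => by simpa using hFn.nonneg z
  have hKclosed : IsClosed K := by
    have : K = ⋂ z : E d, {w : E d | ⟪w, z⟫ ≤ F z} := by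
      ext w; simp [hK, Set.mem_iInter]
    rw [this]
    refine isClosed_iInter fun z => ?_
    have hcont : Continuous fun w : E d => ⟪w, z⟫ :=
      Continuous.inner continuous_id continuous_const
    exact isClosed_le hcont continuous_const
  have hKsub : K ⊆ Metric.closedBall 0 C := by
    intro w hw
    rw [Metric.mem_closedBall, dist_zero_right]
    by_cases h : w = 0
    · simp [h]; positivity
    · have h1 : ⟪w, w⟫ ≤ F w := hw w
      rw [real_inner_self_eq_norm_sq] at h1
      have h2 := hCle w
      have h3 : (0:ℝ) < ‖w‖ := norm_pos_iff.2 h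
      nlinarith
  have hKcomp : IsCompact K :=
    (isCompact_closedBall 0 C).of_isClosed_subset hKclosed hKsub
  have hcont2 : Continuous fun w : E d => ⟪w, x0⟫ :=
    Continuous.inner continuous_id continuous_const
  obtain ⟨w₀, hw₀K, hw₀max⟩ := hKcomp.exists_isMaxOn ⟨0, h0K⟩ hcont2.continuousOn
  set M : ℝ := ⟪w₀, x0⟫ with hM
  have hM1 : 1 ≤ M := by
    rw [← hFx0]
    refine hFn.le_of_dual_le fun w hw => ?_
    have hwK : w ∈ K := by
      intro z
      have := hFn.inner_le_mul z w
      rw [real_inner_comm]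
      calc ⟪z, w⟫ ≤ F z * dualNorm F w := this
        _ ≤ F z * 1 := mul_le_mul_of_nonneg_left hw (hFn.nonneg z)
        _ = F z := mul_one _
    exact hw₀max hwK
  have hM0 : 0 < M := lt_of_lt_of_le one_pos hM1
  refine ⟨M⁻¹ • w₀, ?_⟩
  rw [subdiff_char hFn hFx0]
  constructor
  · rw [real_inner_smul_left, ← hM, inv_mul_cancel₀ hM0.ne']
  · intro z
    rw [real_inner_smul_left]
    calc M⁻¹ * ⟪w₀, z⟫ ≤ M⁻¹ * F z := by
          exact mul_le_mul_of_nonneg_left (hw₀K z) (by positivity)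
      _ ≤ 1 * F z := mul_le_mul_of_nonneg_right (by
          rw [inv_le_one_iff₀]; right; exact hM1) (hFn.nonneg z)
      _ = F z := one_mul _

lemma subdiff_subset_comb {k : ℕ} (hk : 0 < k) (f : Fin k → E d → ℝ)
    (hf : ∀ i, IsNorm (f i)) (x0 : E d) (hx0 : ∀ i, f i x0 ≠ 0)
    {s : E d} (hs : s ∈ subdiff (fun x => ⨆ i, f i x / f i x0) x0) :
    ∃ (lam : Fin k → ℝ) (w : Fin k → E d),
      (∀ i, 0 ≤ lam i) ∧ (∑ i, lam i = 1) ∧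
      (∀ i, dualNorm (f i) (w i) ≤ 1 / f i x0) ∧ s = ∑ i, lam i • w i := by
  classical
  have hne : Nonempty (Fin k) := ⟨⟨0, hk⟩⟩
  set F : E d → ℝ := fun x => ⨆ i, f i x / f i x0 with hF
  have hFn : IsNorm F := isNorm_Fmax hk hf hx0
  have hFx0 : F x0 = 1 := sup_one hk hx0
  rw [subdiff_char hFn hFx0] at hs
  obtain ⟨hs1, hs2⟩ := hs
  set B : Fin k → Set (E d) := fun i => {w | dualNorm (f i) w ≤ 1 / f i x0} with hB
  have hpos : ∀ i, 0 < f i x0 := fx0_pos hf hx0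
  have hB0 : ∀ i, (0:E d) ∈ B i := fun i => by
    simp only [hB, Set.mem_setOf_eq, (hf i).dual_zero]
    exact le_of_lt (div_pos one_pos (hpos i))
  have hBconv : ∀ i, Convex ℝ (B i) := by
    intro i x hx y hy a b ha hb hab
    simp only [hB, Set.mem_setOf_eq] at hx hy ⊢
    calc dualNorm (f i) (a • x + b • y)
        ≤ dualNorm (f i) (a • x) + dualNorm (f i) (b • y) := (hf i).dual_add_le _ _
      _ ≤ a * dualNorm (f i) x + b * dualNorm (f i) y :=
          add_le_add ((hf i).dual_smul_le ha x) ((hf i).dual_smul_le hb y)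
      _ ≤ a * (1 / f i x0) + b * (1 / f i x0) :=
          add_le_add (mul_le_mul_of_nonneg_left hx ha) (mul_le_mul_of_nonneg_left hy hb)
      _ = 1 / f i x0 := by rw [← add_mul, hab, one_mul]
  have hBclosed : ∀ i, IsClosed (B i) :=
    fun i => IsClosed.preimage (hf i).dual_continuous isClosed_Iic
  have hBcomp : ∀ i, IsCompact (B i) := by
    intro i
    obtain ⟨C, hC, hCle⟩ := (hf i).exists_norm_le_dual
    refine (isCompact_closedBall (0:E d) (C * (1 / f i x0))).of_isClosed_subset
      (hBclosed i) ?_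
    intro w hw
    rw [Metric.mem_closedBall, dist_zero_right]
    calc ‖w‖ ≤ C * dualNorm (f i) w := hCle w
      _ ≤ C * (1 / f i x0) := mul_le_mul_of_nonneg_left hw hC.le
  set φsum : (Fin k → ℝ) × (Fin k → E d) → E d := fun p => ∑ i, p.1 i • p.2 i with hφsum
  have hφcont : Continuous φsum := by
    refine continuous_finset_sum _ fun i _ => ?_
    exact ((continuous_apply i).comp continuous_fst).smul
      ((continuous_apply i).comp continuous_snd)
  set Cs : Set (E d) := φsum '' ((stdSimplex ℝ (Fin k)) ×ˢ (Set.univ.pi B)) with hCs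
  have hCcomp : IsCompact Cs :=
    ((isCompact_stdSimplex (𝕜 := ℝ) (ι := Fin k)).prod (isCompact_univ_pi hBcomp)).image hφcont
  have hCconv : Convex ℝ Cs := by
    rintro _ ⟨⟨l1, w1⟩, ⟨hl1, hw1⟩, rfl⟩ _ ⟨⟨l2, w2⟩, ⟨hl2, hw2⟩, rfl⟩ a b ha hb hab
    set ν : Fin k → ℝ := fun i => a * l1 i + b * l2 i with hν
    have hνnn : ∀ i, 0 ≤ ν i := fun i =>
      add_nonneg (mul_nonneg ha (hl1.1 i)) (mul_nonneg hb (hl2.1 i))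
    have hνsum : ∑ i, ν i = 1 := by
      simp only [hν, Finset.sum_add_distrib, ← Finset.mul_sum, hl1.2, hl2.2]
      simpa using hab
    set w : Fin k → E d := fun i =>
      if h : ν i = 0 then 0 else (ν i)⁻¹ • ((a * l1 i) • w1 i + (b * l2 i) • w2 i) with hw
    have hwmem : ∀ i, w i ∈ B i := by
      intro i
      by_cases h : ν i = 0
      · simp only [hw, h, dif_pos]; exact hB0 i
      · have hνpos : 0 < ν i := lt_of_le_of_ne (hνnn i) (Ne.symm h)
        simp only [hw, dif_neg h, hB, Set.mem_setOf_eq]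
        calc dualNorm (f i) ((ν i)⁻¹ • ((a * l1 i) • w1 i + (b * l2 i) • w2 i))
            ≤ (ν i)⁻¹ * dualNorm (f i) ((a * l1 i) • w1 i + (b * l2 i) • w2 i) :=
              (hf i).dual_smul_le (by positivity) _
          _ ≤ (ν i)⁻¹ * (dualNorm (f i) ((a * l1 i) • w1 i)
                + dualNorm (f i) ((b * l2 i) • w2 i)) :=
              mul_le_mul_of_nonneg_left ((hf i).dual_add_le _ _) (by positivity)
          _ ≤ (ν i)⁻¹ * ((a * l1 i) * dualNorm (f i) (w1 i)
                + (b * l2 i) * dualNorm (f i) (w2 i)) := by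
              refine mul_le_mul_of_nonneg_left ?_ (by positivity)
              exact add_le_add ((hf i).dual_smul_le (mul_nonneg ha (hl1.1 i)) _)
                ((hf i).dual_smul_le (mul_nonneg hb (hl2.1 i)) _)
          _ ≤ (ν i)⁻¹ * ((a * l1 i) * (1 / f i x0) + (b * l2 i) * (1 / f i x0)) := by
              refine mul_le_mul_of_nonneg_left ?_ (by positivity)
              refine add_le_add ?_ ?_
              · exact mul_le_mul_of_nonneg_left (hw1 i (Set.mem_univ i))
                  (mul_nonneg ha (hl1.1 i))
              · exact mul_le_mul_of_nonneg_left (hw2 i (Set.mem_univ i))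
                  (mul_nonneg hb (hl2.1 i))
          _ = (ν i)⁻¹ * (ν i * (1 / f i x0)) := by rw [hν]; ring_nf
          _ = 1 / f i x0 := by rw [← mul_assoc, inv_mul_cancel₀ h, one_mul]
    have hkey : ∀ i, ν i • w i = (a * l1 i) • w1 i + (b * l2 i) • w2 i := by
      intro i
      by_cases h : ν i = 0
      · have h1 : a * l1 i = 0 := by
          have := hνnn i
          have h2 := mul_nonneg ha (hl1.1 i)
          have h3 := mul_nonneg hb (hl2.1 i)
          simp only [hν] at h; linarith
        have h2 : b * l2 i = 0 := by
          have h3 := mul_nonneg ha (hl1.1 i)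
          simp only [hν] at h; linarith [mul_nonneg hb (hl2.1 i)]
        simp [h, h1, h2]
      · simp only [hw, dif_neg h, smul_smul, mul_inv_cancel₀ h, one_smul]
    refine ⟨(ν, w), ⟨⟨hνnn, hνsum⟩, fun i _ => hwmem i⟩, ?_⟩
    simp only [hφsum]
    calc ∑ i, ν i • w i = ∑ i, ((a * l1 i) • w1 i + (b * l2 i) • w2 i) :=
          Finset.sum_congr rfl fun i _ => hkey i
      _ = a • ∑ i, l1 i • w1 i + b • ∑ i, l2 i • w2 i := by
          rw [Finset.sum_add_distrib, Finset.smul_sum, Finset.smul_sum]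
          congr 1 <;> exact Finset.sum_congr rfl fun i _ => by rw [smul_smul]
  have hBsubC : ∀ j, B j ⊆ Cs := by
    intro j b hb
    refine ⟨(fun i => if i = j then 1 else 0, fun i => if i = j then b else 0),
      ⟨⟨fun i => by by_cases h : i = j <;> simp [h], by simp⟩, fun i _ => ?_⟩, ?_⟩
    · by_cases h : i = j
      · subst h; simpa using hb
      · simp only [if_neg h]; exact hB0 i
    · simp only [φsum]
      rw [Finset.sum_eq_single j]
      · simp
      · intro i _ h; simp [h]
      · intro h; exact absurd (Finset.mem_univ j) h
  -- separation argument
  have hsC : s ∈ Cs := by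
    by_contra hsc
    obtain ⟨φ, u, hφC, hφs⟩ :=
      geometric_hahn_banach_closed_point hCconv hCcomp.isClosed hsc
    set v : E d := (InnerProductSpace.toDual ℝ (E d)).symm φ with hv
    have hveq : ∀ x, ⟪v, x⟫ = φ x := fun x => by
      simp [hv, InnerProductSpace.toDual_symm_apply]
    have hFvu : F v ≤ u := by
      refine ciSup_le fun i => ?_
      rw [div_le_iff₀ (hpos i)]
      refine (hf i).le_of_dual_le fun w hw => ?_
      have hw' : (f i x0)⁻¹ • w ∈ B i := by
        simp only [hB, Set.mem_setOf_eq]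
        calc dualNorm (f i) ((f i x0)⁻¹ • w) ≤ (f i x0)⁻¹ * dualNorm (f i) w :=
              (hf i).dual_smul_le (inv_nonneg.2 (hpos i).le) _
          _ ≤ (f i x0)⁻¹ * 1 := mul_le_mul_of_nonneg_left hw (inv_nonneg.2 (hpos i).le)
          _ = 1 / f i x0 := by rw [mul_one, one_div]
      have := hφC _ (hBsubC i hw')
      rw [← hveq] at this
      rw [real_inner_smul_right] at this
      have h2 : ⟪v, w⟫ < u * f i x0 := by
        have h3 := mul_lt_mul_of_pos_left this (hpos i)
        rw [mul_inv_cancel_left₀ (hpos i).ne'] at h3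
        linarith [h3]
      rw [real_inner_comm v w]
      linarith
    have h1 : ⟪s, v⟫ ≤ F v := hs2 v
    have h2 : u < ⟪s, v⟫ := by
      rw [real_inner_comm v s, hveq]
      exact hφs
    linarith
  obtain ⟨⟨lam, w⟩, ⟨hlam, hw⟩, hsum⟩ := hsC
  exact ⟨lam, w, hlam.1, hlam.2, fun i => hw i (Set.mem_univ i), hsum.symm⟩

/-- For `g ∈ ℝ^d` and optimal weights `μ*_i = 1/‖x0‖_(i)`, the Euclidean
distance of `g` to the cone generated by the subdifferential of the optimally weighted max
norm at `x0` equals the minimum of `‖g − Σ_i x_i‖₂` over `τ_1, …, τ_k ≥ 0` and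
`x_1, …, x_k` subject to `⟨x_i, x0⟩ = τ_i ‖x0‖_max,μ*` and `‖x_i‖_(i)° ≤ τ_i μ*_i`. -/
theorem infDist_coneSubdiff_optMax_eq {d k : ℕ} (hk : 0 < k) (g : E d)
    (f : Fin k → E d → ℝ) (hf : ∀ i, IsNorm (f i))
    (x0 : E d) (hx0 : ∀ i, f i x0 ≠ 0) :
    Metric.infDist g (posCone (subdiff (fun x => ⨆ i, f i x / f i x0) x0)) =
      sInf {t : ℝ | ∃ τ : Fin k → ℝ, (∀ i, 0 ≤ τ i) ∧ ∃ x : Fin k → E d,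
        t = ‖g - ∑ i, x i‖ ∧
        (∀ i, ⟪x i, x0⟫ = τ i * (⨆ j, f j x0 / f j x0)) ∧
        ∀ i, dualNorm (f i) (x i) ≤ τ i * (1 / f i x0)} := by
  classical
  have hne : Nonempty (Fin k) := ⟨⟨0, hk⟩⟩
  set F : E d → ℝ := fun x => ⨆ i, f i x / f i x0 with hF
  have hFn : IsNorm F := isNorm_Fmax hk hf hx0
  have hsup1 : (⨆ j, f j x0 / f j x0) = 1 := sup_one hk hx0
  have hFx0 : F x0 = 1 := hsup1
  have hpos : ∀ i, 0 < f i x0 := fx0_pos hf hx0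
  set S : Set (E d) := subdiff F x0 with hS
  set A : Set (E d) := posCone S with hA
  set T : Set ℝ := {t : ℝ | ∃ τ : Fin k → ℝ, (∀ i, 0 ≤ τ i) ∧ ∃ x : Fin k → E d,
        t = ‖g - ∑ i, x i‖ ∧
        (∀ i, ⟪x i, x0⟫ = τ i * (⨆ j, f j x0 / f j x0)) ∧
        ∀ i, dualNorm (f i) (x i) ≤ τ i * (1 / f i x0)} with hT
  obtain ⟨s0, hs0⟩ := subdiff_nonempty hFn hFx0
  have hs0' := hs0
  rw [subdiff_char hFn hFx0] at hs0'
  have hAne : A.Nonempty := ⟨s0, 1, one_pos, s0, hs0, (one_smul ℝ s0).symm⟩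
  have hTne : T.Nonempty := by
    refine ⟨‖g‖, fun _ => 0, fun _ => le_refl 0, fun _ => 0, by simp, fun i => by simp, fun i => by
      simp [(hf i).dual_zero]⟩
  have hTbdd : BddBelow T := by
    refine ⟨0, ?_⟩
    rintro t ⟨τ, hτ, x, rfl, _, _⟩
    exact norm_nonneg _
  -- oriented membership: elements of subdiff evaluated
  refine le_antisymm ?_ ?_
  · -- infDist ≤ sInf T
    refine le_csInf hTne ?_
    rintro t ⟨τ, hτ, x, rfl, hx1, hx2⟩
    simp only [hsup1, mul_one] at hx1
    by_cases hall : ∀ i, τ i = 0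
    · have hx0' : ∀ i, x i = 0 := by
        intro i
        refine (hf i).eq_zero_of_dual_nonpos ?_
        have := hx2 i
        rw [hall i, zero_mul] at this
        exact this
      have hsum0 : ∑ i, x i = 0 := by simp [hx0']
      rw [hsum0, sub_zero]
      -- infDist g A ≤ ‖g‖ via ε • s0 ∈ A
      have hs0ne : s0 ≠ 0 := by
        intro h
        rw [h] at hs0'
        simp at hs0'
      have hns0 : 0 < ‖s0‖ := norm_pos_iff.2 hs0ne
      refine le_of_forall_pos_le_add fun δ hδ => ?_
      set ε : ℝ := δ / ‖s0‖ with hε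
      have hε0 : 0 < ε := div_pos hδ hns0
      have hmem : ε • s0 ∈ A := ⟨ε, hε0, s0, hs0, rfl⟩
      calc Metric.infDist g A ≤ dist g (ε • s0) := Metric.infDist_le_dist_of_mem hmem
        _ = ‖g - ε • s0‖ := by rw [dist_eq_norm]
        _ ≤ ‖g‖ + ‖ε • s0‖ := norm_sub_le g (ε • s0)
        _ = ‖g‖ + δ := by
            rw [norm_smul, Real.norm_eq_abs, abs_of_pos hε0, hε,
              div_mul_cancel₀ _ hns0.ne']
    · push_neg at hall
      obtain ⟨i₀, hi₀⟩ := hall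
      set τs : ℝ := ∑ i, τ i with hτs
      have hτs0 : 0 < τs := by
        refine Finset.sum_pos' (fun i _ => hτ i) ⟨i₀, Finset.mem_univ i₀, ?_⟩
        exact lt_of_le_of_ne (hτ i₀) (Ne.symm hi₀)
      have hmem : (∑ i, x i) ∈ A := by
        refine ⟨τs, hτs0, τs⁻¹ • (∑ i, x i), ?_, by rw [smul_smul, mul_inv_cancel₀ hτs0.ne', one_smul]⟩
        rw [hS, subdiff_char hFn hFx0]
        constructor
        · rw [real_inner_smul_left, sum_inner]
          have : ∑ i, ⟪x i, x0⟫ = τs := by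
            rw [hτs]; exact Finset.sum_congr rfl fun i _ => hx1 i
          rw [this, inv_mul_cancel₀ hτs0.ne']
        · intro z
          rw [real_inner_smul_left]
          have hterm : ∀ i, ⟪x i, z⟫ ≤ τ i * F z := by
            intro i
            calc ⟪x i, z⟫ = ⟪z, x i⟫ := real_inner_comm z (x i)
              _ ≤ f i z * dualNorm (f i) (x i) := (hf i).inner_le_mul z (x i)
              _ ≤ f i z * (τ i * (1 / f i x0)) :=
                  mul_le_mul_of_nonneg_left (hx2 i) ((hf i).nonneg z)
              _ = τ i * (f i z / f i x0) := by ring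
              _ ≤ τ i * F z := by
                  refine mul_le_mul_of_nonneg_left ?_ (hτ i)
                  exact le_ciSup (bdd_range fun j => f j z / f j x0) i
          have hsum : ⟪∑ i, x i, z⟫ ≤ τs * F z := by
            rw [sum_inner, hτs, Finset.sum_mul]
            exact Finset.sum_le_sum fun i _ => hterm i
          calc τs⁻¹ * ⟪∑ i, x i, z⟫ ≤ τs⁻¹ * (τs * F z) :=
                mul_le_mul_of_nonneg_left hsum (by positivity)
            _ = F z := by rw [← mul_assoc, inv_mul_cancel₀ hτs0.ne', one_mul]
      calc Metric.infDist g A ≤ dist g (∑ i, x i) := Metric.infDist_le_dist_of_mem hmem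
        _ = ‖g - ∑ i, x i‖ := by rw [dist_eq_norm]
  · -- sInf T ≤ infDist
    by_contra hlt
    push_neg at hlt
    obtain ⟨y, hyA, hdist⟩ := (Metric.infDist_lt_iff hAne).1 hlt
    obtain ⟨τ, hτ0, s, hsS, rfl⟩ := hyA
    obtain ⟨lam, w, hlamnn, hlamsum, hwB, hsdec⟩ :=
      subdiff_subset_comb hk f hf x0 hx0 hsS
    have hsS' : s ∈ subdiff F x0 := hsS
    rw [subdiff_char hFn hFx0] at hsS'
    obtain ⟨hsx0, _⟩ := hsS'
    -- forcing: lam i * ⟪w i, x0⟫ = lam i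
    have hwx0le : ∀ i, ⟪w i, x0⟫ ≤ 1 := by
      intro i
      calc ⟪w i, x0⟫ = ⟪x0, w i⟫ := real_inner_comm x0 (w i)
        _ ≤ f i x0 * dualNorm (f i) (w i) := (hf i).inner_le_mul x0 (w i)
        _ ≤ f i x0 * (1 / f i x0) := mul_le_mul_of_nonneg_left (hwB i) (hpos i).le
        _ = 1 := by rw [mul_one_div, div_self (hx0 i)]
    have hforce : ∀ i, lam i * ⟪w i, x0⟫ = lam i := by
      have hsum : ∑ i, lam i * ⟪w i, x0⟫ = 1 := by
        have : ⟪s, x0⟫ = ∑ i, lam i * ⟪w i, x0⟫ := by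
          rw [hsdec, sum_inner]
          exact Finset.sum_congr rfl fun i _ => real_inner_smul_left _ _ _
        rw [← this, hsx0]
      have hzero : ∑ i, (lam i - lam i * ⟪w i, x0⟫) = 0 := by
        rw [Finset.sum_sub_distrib, hlamsum, hsum, sub_self]
      have hnn : ∀ i ∈ Finset.univ, 0 ≤ lam i - lam i * ⟪w i, x0⟫ := by
        intro i _
        have h1 : lam i * ⟪w i, x0⟫ ≤ lam i * 1 :=
          mul_le_mul_of_nonneg_left (hwx0le i) (hlamnn i)
        linarith [h1]
      intro i
      have := (Finset.sum_eq_zero_iff_of_nonneg hnn).1 hzero i (Finset.mem_univ i)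
      linarith
    -- build feasible point
    have hmemT : ‖g - τ • s‖ ∈ T := by
      refine ⟨fun i => τ * lam i, fun i => mul_nonneg hτ0.le (hlamnn i),
        fun i => (τ * lam i) • w i, ?_, ?_, ?_⟩
      · have hsum : (∑ i, (τ * lam i) • w i) = τ • s := by
          rw [hsdec, Finset.smul_sum]
          exact Finset.sum_congr rfl fun i _ => (smul_smul τ (lam i) (w i)).symm
        rw [hsum]
      · intro i
        rw [hsup1, mul_one, real_inner_smul_left, mul_assoc, hforce i]
      · intro i
        calc dualNorm (f i) ((τ * lam i) • w i) ≤ (τ * lam i) * dualNorm (f i) (w i) :=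
              (hf i).dual_smul_le (mul_nonneg hτ0.le (hlamnn i)) _
          _ ≤ (τ * lam i) * (1 / f i x0) :=
              mul_le_mul_of_nonneg_left (hwB i) (mul_nonneg hτ0.le (hlamnn i))
    have : sInf T ≤ dist g (τ • s) := by
      rw [dist_eq_norm]
      exact csInf_le hTbdd hmemT
    linarith
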